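/- Let R be a reduced irreducible root system with positive roots R_+, root lattice Q, weight lattice P, and let θ be the highest short root (with the normalization (α,α)=2 for short roots, so θ is the maximal positive coroot viewed as a root). Then θ is the least nonzero element of Q_+ ∩ P_+ with respect to the ordering induced by Q_+: for every nonzero b ∈ Q ∩ P_+ (equivalently Q_+ ∩ P_+), the difference b − θ lies in Q_+ = ⊕ᵢ ℤ≥0 αᵢ. -/

import Mathlib

open scoped RealInnerProductSpace Pointwise BigOperators

set_option maxHeartbeats 1000000

/-- **The highest short root is the least nonzero element of `Q₊ ∩ P₊`.**
`R = Rplus ∪ (−Rplus)` is a reduced irreducible crystallographic root system in `ℝⁿ`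
with simple roots `simple i`, normalized so that short roots have `(α,α) = 2`;
`θ` is the maximal short positive root (maximal among short positive roots with
respect to the order induced by `Q₊ = ⊕ᵢ ℤ≥0 αᵢ`).  Then for every nonzero
`b ∈ Q₊ ∩ P₊` (a dominant element of the root lattice), `b − θ ∈ Q₊`. -/
theorem highest_short_root_least (n : ℕ)
    (Rset Rplus : Set (EuclideanSpace ℝ (Fin n)))
    (simple : Fin n → EuclideanSpace ℝ (Fin n))
    (hfin : Rset.Finite)
    (hR : Rset = Rplus ∪ (-Rplus)) (hdisj : Disjoint Rplus (-Rplus))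
    (h0 : (0 : EuclideanSpace ℝ (Fin n)) ∉ Rset)
    (hsimple : ∀ i, simple i ∈ Rplus)
    (hindep : LinearIndependent ℝ simple)
    (hpos_sum : ∀ α ∈ Rplus, ∃ c : Fin n → ℕ, α = ∑ i, (c i : ℝ) • simple i)
    (hrefl : ∀ α ∈ Rset, ∀ β ∈ Rset, β - (2 * ⟪β, α⟫ / ⟪α, α⟫) • α ∈ Rset)
    (hcart : ∀ α ∈ Rset, ∀ β ∈ Rset, ∃ m : ℤ, 2 * ⟪β, α⟫ / ⟪α, α⟫ = m)
    (hred : ∀ α ∈ Rset, ∀ t : ℝ, t • α ∈ Rset → t = 1 ∨ t = -1)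
    (hirr : ∀ S T : Set (EuclideanSpace ℝ (Fin n)), S ∪ T = Rset →
      (∀ a ∈ S, ∀ b ∈ T, ⟪a, b⟫ = 0) → S = ∅ ∨ T = ∅)
    (hshort : ∀ α ∈ Rset, 2 ≤ ⟪α, α⟫)
    (θ : EuclideanSpace ℝ (Fin n)) (hθR : θ ∈ Rplus) (hθ2 : ⟪θ, θ⟫ = 2)
    (hθmax : ∀ α ∈ Rplus, ⟪α, α⟫ = 2 →
      ∃ c : Fin n → ℕ, θ - α = ∑ i, (c i : ℝ) • simple i) :
    ∀ b : EuclideanSpace ℝ (Fin n),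
      (∃ c : Fin n → ℕ, b = ∑ i, (c i : ℝ) • simple i) →
      (∀ i, 0 ≤ ⟪b, simple i⟫) → b ≠ 0 →
      ∃ c : Fin n → ℕ, b - θ = ∑ i, (c i : ℝ) • simple i := by
  intro b hbQ hbdom hb0
  obtain ⟨c, hc⟩ := hbQ
  rcases Nat.eq_zero_or_pos n with rfl | hn
  · exact absurd (by rw [hc]; simp) hb0
  have hne : Nonempty (Fin n) := ⟨⟨0, hn⟩⟩
  -- a basis made of the simple roots
  obtain ⟨B, hB⟩ : ∃ B : Module.Basis (Fin n) ℝ (EuclideanSpace ℝ (Fin n)), ∀ i, B i = simple i :=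
    ⟨basisOfLinearIndependentOfCardEqFinrank hindep (by simp), fun i => by
      simp [coe_basisOfLinearIndependentOfCardEqFinrank]⟩
  have hrepr : ∀ (u : Fin n → ℝ) (i : Fin n), B.repr (∑ j, u j • simple j) i = u i := by
    intro u i
    have h1 : (∑ j, u j • simple j) = ∑ j, u j • B j := by simp only [hB]
    rw [h1, B.repr_sum_self]
  have hreprs : ∀ i j, B.repr (simple i) j = if i = j then 1 else 0 := by
    intro i j; rw [← hB, B.repr_self]
    simp [Finsupp.single_apply]
  have hexpand : ∀ v : EuclideanSpace ℝ (Fin n), v = ∑ i, B.repr v i • simple i := by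
    intro v
    calc v = ∑ i, B.repr v i • B i := (B.sum_repr v).symm
      _ = ∑ i, B.repr v i • simple i := Finset.sum_congr rfl fun i _ => by rw [hB]
  -- inner product expansions
  have hIL : ∀ (u : Fin n → ℝ) (w : EuclideanSpace ℝ (Fin n)),
      ⟪∑ i, u i • simple i, w⟫ = ∑ i, u i * ⟪simple i, w⟫ := by
    intro u w; rw [sum_inner]; simp only [real_inner_smul_left]
  have hIR : ∀ (u : Fin n → ℝ) (w : EuclideanSpace ℝ (Fin n)),
      ⟪w, ∑ i, u i • simple i⟫ = ∑ i, u i * ⟪w, simple i⟫ := by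
    intro u w; rw [inner_sum]; simp only [real_inner_smul_right]
  -- basic facts about roots
  have hRp : Rplus ⊆ Rset := by rw [hR]; exact Set.subset_union_left
  have hθRs : θ ∈ Rset := hRp hθR
  have hsymmR : ∀ a ∈ Rset, -a ∈ Rset := by
    intro a ha; rw [hR] at ha ⊢
    rcases ha with h | h
    · right; simpa using h
    · left; rw [Set.mem_neg] at h; simpa using h
  have hpos : ∀ a ∈ Rset, 0 < ⟪a, a⟫ := fun a ha => lt_of_lt_of_le two_pos (hshort a ha)
  have hcases : ∀ a ∈ Rset, a ∈ Rplus ∨ -a ∈ Rplus := by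
    intro a ha; rw [hR] at ha
    rcases ha with h | h
    · exact Or.inl h
    · right; rwa [Set.mem_neg] at h
  have hplusnn : ∀ a ∈ Rplus, ∀ i, 0 ≤ B.repr a i := by
    intro a ha i
    obtain ⟨e, he⟩ := hpos_sum a ha
    rw [he, hrepr]; positivity
  have hreprsub : ∀ (v w : EuclideanSpace ℝ (Fin n)) (t : ℝ) (j : Fin n),
      B.repr (v - t • w) j = B.repr v j - t * B.repr w j := by
    intro v w t j
    rw [map_sub, map_smul, Finsupp.sub_apply, Finsupp.smul_apply, smul_eq_mul]
  have hreprsub1 : ∀ (v w : EuclideanSpace ℝ (Fin n)) (j : Fin n),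
      B.repr (v - w) j = B.repr v j - B.repr w j := by
    intro v w j
    rw [map_sub, Finsupp.sub_apply]
  have hreprneg : ∀ (v : EuclideanSpace ℝ (Fin n)) (j : Fin n),
      B.repr (-v) j = -(B.repr v j) := by
    intro v j
    rw [map_neg, Finsupp.neg_apply]
  have hreprsmul : ∀ (w : EuclideanSpace ℝ (Fin n)) (t : ℝ) (j : Fin n),
      B.repr (t • w) j = t * B.repr w j := by
    intro w t j
    rw [map_smul, Finsupp.smul_apply, smul_eq_mul]
  -- squared norm of a difference with a scalar multiple
  have hnormsub : ∀ (v w : EuclideanSpace ℝ (Fin n)) (t : ℝ),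
      ⟪v - t • w, v - t • w⟫ = ⟪v, v⟫ - 2 * (t * ⟪v, w⟫) + t * (t * ⟪w, w⟫) := by
    intro v w t
    simp only [real_inner_sub_sub_self, real_inner_smul_left, real_inner_smul_right]
  -- Cartan integers with reflection closure and norm preservation
  have hcartan : ∀ α ∈ Rset, ∀ β ∈ Rset, ∃ m : ℤ, 2 * ⟪β, α⟫ = (m : ℝ) * ⟪α, α⟫ ∧
      β - (m : ℝ) • α ∈ Rset ∧ ⟪β - (m : ℝ) • α, β - (m : ℝ) • α⟫ = ⟪β, β⟫ := by
    intro α hα β hβ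
    obtain ⟨m, hm⟩ := hcart α hα β hβ
    have h1 : ⟪α, α⟫ ≠ 0 := ne_of_gt (hpos α hα)
    have h2 : 2 * ⟪β, α⟫ = (m : ℝ) * ⟪α, α⟫ := by
      rw [← hm]; exact (div_mul_cancel₀ _ h1).symm
    refine ⟨m, h2, ?_, ?_⟩
    · have := hrefl α hα β hβ; rwa [hm] at this
    · rw [hnormsub]
      linear_combination (-(m : ℝ)) * h2
  -- simple roots have nonpositive mutual inner products
  have hoff : ∀ i j, i ≠ j → ⟪simple i, simple j⟫ ≤ 0 := by
    intro i j hij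
    by_contra hpos'
    push_neg at hpos'
    obtain ⟨m, hm, hmem, _⟩ :=
      hcartan (simple j) (hRp (hsimple j)) (simple i) (hRp (hsimple i))
    have hsj : 0 < ⟪simple j, simple j⟫ := hpos _ (hRp (hsimple j))
    have hm1 : (1 : ℝ) ≤ (m : ℝ) := by
      have h' : (0 : ℝ) < (m : ℝ) := by nlinarith
      have h'' : 0 < m := by exact_mod_cast h'
      exact_mod_cast h''
    rcases hcases _ hmem with h | h
    · have h2 := hplusnn _ h j
      have h3 : B.repr (simple i - (m : ℝ) • simple j) j = -(m : ℝ) := by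
        rw [hreprsub, hreprs i j, hreprs j j, if_neg hij, if_pos rfl]
        ring
      rw [h3] at h2; linarith
    · have h2 := hplusnn _ h i
      have h3 : B.repr (-(simple i - (m : ℝ) • simple j)) i = -1 := by
        rw [hreprneg, hreprsub, hreprs i i, hreprs j i, if_pos rfl, if_neg (Ne.symm hij)]
        ring
      rw [h3] at h2; linarith
  -- every root lies in the span of the short roots
  have hspan : ∀ δ ∈ Rset,
      δ ∈ Submodule.span ℝ {γ : EuclideanSpace ℝ (Fin n) | γ ∈ Rset ∧ ⟪γ, γ⟫ = 2} := by
    set U := Submodule.span ℝ {γ : EuclideanSpace ℝ (Fin n) | γ ∈ Rset ∧ ⟪γ, γ⟫ = 2} with hU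
    have horthgen : ∀ δ ∈ Rset, δ ∉ U → ∀ γ, γ ∈ Rset → ⟪γ, γ⟫ = 2 → ⟪γ, δ⟫ = 0 := by
      intro δ hδ hδU γ hγ hγ2
      by_contra hneq
      obtain ⟨m, hm, hmem, hnorm⟩ := hcartan δ hδ γ hγ
      have hm0 : (m : ℝ) ≠ 0 := by
        intro h; rw [h] at hm; simp at hm
        exact hneq hm
      have hγU : γ ∈ U := Submodule.subset_span ⟨hγ, hγ2⟩
      have hsU : γ - (m : ℝ) • δ ∈ U := Submodule.subset_span ⟨hmem, by rw [hnorm, hγ2]⟩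
      have hmd : (m : ℝ) • δ ∈ U := by
        have := Submodule.sub_mem U hγU hsU; simpa using this
      have : δ ∈ U := by
        have h2 := Submodule.smul_mem U (m : ℝ)⁻¹ hmd
        rwa [inv_smul_smul₀ hm0] at h2
      exact hδU this
    intro δ hδ
    by_contra hδU
    have horth : ∀ a ∈ {a | a ∈ Rset ∧ a ∈ U}, ∀ b' ∈ {a | a ∈ Rset ∧ a ∉ U}, ⟪a, b'⟫ = 0 := by
      rintro a ⟨haR, haU⟩ b' ⟨hbR, hbU⟩
      have hperp : ∀ v ∈ U, ⟪v, b'⟫ = 0 := by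
        intro v hv
        induction hv using Submodule.span_induction with
        | mem x hx => exact horthgen b' hbR hbU x hx.1 hx.2
        | zero => simp
        | add x y _ _ hx hy => rw [inner_add_left, hx, hy]; ring
        | smul t x _ hx => rw [real_inner_smul_left, hx]; ring
      exact hperp a haU
    rcases hirr {a | a ∈ Rset ∧ a ∈ U} {a | a ∈ Rset ∧ a ∉ U}
        (by ext x; simp only [Set.mem_union, Set.mem_setOf_eq]; tauto) horth with h | h
    · have hθin : θ ∈ {a | a ∈ Rset ∧ a ∈ U} :=
        ⟨hθRs, Submodule.subset_span ⟨hθRs, hθ2⟩⟩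
      rw [Set.eq_empty_iff_forall_notMem] at h
      exact h θ hθin
    · rw [Set.eq_empty_iff_forall_notMem] at h
      exact h δ ⟨hδ, hδU⟩
  -- every root pairs nontrivially with some short root
  have hshortpair : ∀ δ ∈ Rset, ∃ γ, γ ∈ Rset ∧ ⟪γ, γ⟫ = 2 ∧ ⟪δ, γ⟫ ≠ 0 := by
    intro δ hδ
    by_contra hno
    push_neg at hno
    have hperp : ∀ v ∈ Submodule.span ℝ
        {γ : EuclideanSpace ℝ (Fin n) | γ ∈ Rset ∧ ⟪γ, γ⟫ = 2}, ⟪δ, v⟫ = 0 := by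
      intro v hv
      induction hv using Submodule.span_induction with
      | mem x hx => exact hno x hx.1 hx.2
      | zero => simp
      | add x y _ _ hx hy => rw [inner_add_right, hx, hy]; ring
      | smul t x _ hx => rw [real_inner_smul_right, hx]; ring
    have := hperp δ (hspan δ hδ)
    exact absurd this (ne_of_gt (hpos δ hδ))
  -- every root has even squared norm
  have hevenroot : ∀ δ ∈ Rset, ∃ k : ℤ, 1 ≤ k ∧ ⟪δ, δ⟫ = 2 * (k : ℝ) := by
    intro δ hδ
    obtain ⟨γ, hγ, hγ2, hne'⟩ := hshortpair δ hδ
    obtain ⟨p, hp, _, _⟩ := hcartan γ hγ δ hδ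
    obtain ⟨q, hq, _, _⟩ := hcartan δ hδ γ hγ
    have hs : 0 < ⟪δ, δ⟫ := hpos δ hδ
    have hs2 : 2 ≤ ⟪δ, δ⟫ := hshort δ hδ
    have hpr : ⟪δ, γ⟫ = (p : ℝ) := by rw [hγ2] at hp; linarith
    have hqr : 2 * ⟪δ, γ⟫ = (q : ℝ) * ⟪δ, δ⟫ := by
      rw [real_inner_comm] at hq; exact hq
    have hp0 : (p : ℝ) ≠ 0 := by rw [← hpr]; exact hne'
    have hq0 : (q : ℝ) ≠ 0 := by
      intro h; rw [h, zero_mul] at hqr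
      exact hne' (by linarith)
    have hqs : (q : ℝ) * ⟪δ, δ⟫ = 2 * (p : ℝ) := by rw [← hpr]; linarith
    -- key identity : (q:ℝ)^2 * s = 2 * p * q  and  (p*q) * s = 2 * p^2
    have hkey : ((p * q : ℤ) : ℝ) * ⟪δ, δ⟫ = 2 * (p : ℝ) ^ 2 := by
      push_cast; linear_combination (p : ℝ) * hqs
    have hq2s : ((q * q : ℤ) : ℝ) * ⟪δ, δ⟫ = 2 * ((p * q : ℤ) : ℝ) := by
      push_cast; linear_combination (q : ℝ) * hqs
    have hpqpos : 0 < p * q := by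
      have : (0 : ℝ) < ((p * q : ℤ) : ℝ) := by
        have hp2 : (0:ℝ) < (p:ℝ)^2 := by positivity
        nlinarith [hkey]
      exact_mod_cast this
    have hcs : ⟪δ, γ⟫ * ⟪δ, γ⟫ ≤ ⟪δ, δ⟫ * 2 := by
      have := real_inner_mul_inner_self_le δ γ
      rwa [hγ2] at this
    have hpq4 : p * q ≤ 4 := by
      have h1 : ((p * q : ℤ) : ℝ) * ⟪δ, δ⟫ ≤ 4 * ⟪δ, δ⟫ := by
        rw [hkey]; rw [hpr] at hcs; nlinarith
      have h2 : ((p * q : ℤ) : ℝ) ≤ 4 := by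
        by_contra hcon; push_neg at hcon; nlinarith
      exact_mod_cast h2
    rcases eq_or_lt_of_le hpq4 with h4 | h3
    · -- pq = 4 : Cauchy-Schwarz equality, δ = ±γ
      have h4' : ((p * q : ℤ) : ℝ) = 4 := by exact_mod_cast h4
      have ht2 : (p : ℝ) ^ 2 = 2 * ⟪δ, δ⟫ := by
        rw [h4'] at hkey; linarith
      have hv : ⟪δ - ((p : ℝ) / 2) • γ, δ - ((p : ℝ) / 2) • γ⟫ = 0 := by
        rw [hnormsub, hγ2, hpr]; linear_combination (-1/2 : ℝ) * ht2
      have hδγ : δ = ((p : ℝ) / 2) • γ := by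
        have := inner_self_eq_zero.mp hv; rwa [sub_eq_zero] at this
      rcases hred γ hγ ((p : ℝ) / 2) (hδγ ▸ hδ) with h | h
      · refine ⟨1, le_refl 1, ?_⟩
        rw [hδγ, h, one_smul, hγ2]; norm_num
      · refine ⟨1, le_refl 1, ?_⟩
        rw [hδγ, h]
        simp only [neg_smul, one_smul, inner_neg_neg]
        rw [hγ2]; norm_num
    · -- pq ≤ 3 : q² = 1 and s = 2pq
      have hq1 : q * q = 1 := by
        have hb1 : ((q * q : ℤ) : ℝ) * 2 ≤ ((q * q : ℤ) : ℝ) * ⟪δ, δ⟫ := by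
          have h0' : (0:ℝ) ≤ ((q*q : ℤ):ℝ) := by push_cast; exact mul_self_nonneg _
          nlinarith
        have hb2 : ((q * q : ℤ) : ℝ) * 2 ≤ 2 * ((p * q : ℤ) : ℝ) := by
          rw [← hq2s]; exact hb1
        have hb3 : q * q ≤ p * q := by
          have : ((q*q : ℤ):ℝ) ≤ ((p*q : ℤ):ℝ) := by linarith
          exact_mod_cast this
        have hq0' : q ≠ 0 := fun h => hq0 (by rw [h]; simp)
        have hq4 : q * q < 4 := lt_of_le_of_lt hb3 h3
        have hqle : q ≤ 1 := by nlinarith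
        have hqge : -1 ≤ q := by nlinarith
        interval_cases q <;> omega
      refine ⟨p * q, hpqpos, ?_⟩
      have : ((q * q : ℤ) : ℝ) = 1 := by exact_mod_cast congrArg (fun z : ℤ => (z : ℝ)) hq1
      rw [this, one_mul] at hq2s
      linarith
  -- integrality of the Gram matrix
  have hGex : ∀ i j, ∃ g : ℤ, ⟪simple i, simple j⟫ = (g : ℝ) := by
    intro i j
    obtain ⟨kj, _, hkj⟩ := hevenroot (simple j) (hRp (hsimple j))
    obtain ⟨q, hq, _, _⟩ := hcartan (simple j) (hRp (hsimple j)) (simple i) (hRp (hsimple i))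
    refine ⟨q * kj, ?_⟩
    rw [hkj] at hq; push_cast; nlinarith [hq]
  choose G hG using hGex
  have hGsym : ∀ i j, G i j = G j i := by
    intro i j
    have h1 : ((G i j : ℤ) : ℝ) = ((G j i : ℤ) : ℝ) := by
      rw [← hG i j, ← hG j i]
      exact real_inner_comm (simple j) (simple i)
    exact_mod_cast h1
  have hGdiag : ∀ i, Even (G i i) := by
    intro i
    obtain ⟨k, _, hk⟩ := hevenroot (simple i) (hRp (hsimple i))
    have : (G i i : ℝ) = 2 * (k : ℝ) := by rw [← hG]; exact hk
    have h2 : G i i = 2 * k := by exact_mod_cast this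
    exact ⟨k, by omega⟩
  -- evenness of the quadratic form on the root lattice
  have heven : ∀ m : Fin n → ℤ, ∃ N : ℤ,
      ⟪∑ i, ((m i : ℤ) : ℝ) • simple i, ∑ i, ((m i : ℤ) : ℝ) • simple i⟫ = 2 * (N : ℝ) := by
    intro m
    have hdouble : ⟪∑ i, ((m i : ℤ) : ℝ) • simple i, ∑ i, ((m i : ℤ) : ℝ) • simple i⟫
        = ∑ i, ∑ j, ((m i : ℝ) * (m j : ℝ) * (G i j : ℝ)) := by
      rw [hIL]
      apply Finset.sum_congr rfl
      intro i _
      rw [hIR, Finset.mul_sum]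
      apply Finset.sum_congr rfl
      intro j _
      rw [hG]; ring
    have hkey : ∀ s : Finset (Fin n), Even (∑ i ∈ s, ∑ j ∈ s, m i * m j * G i j) := by
      intro s
      induction s using Finset.induction with
      | empty => simp
      | @insert a s ha ih =>
        rw [Finset.sum_insert ha, Finset.sum_insert ha]
        have hrow : ∀ i ∈ s, ∑ j ∈ insert a s, m i * m j * G i j
            = m i * m a * G i a + ∑ j ∈ s, m i * m j * G i j := by
          intro i _; rw [Finset.sum_insert ha]
        rw [Finset.sum_congr rfl hrow, Finset.sum_add_distrib]
        have hswap : ∑ i ∈ s, m i * m a * G i a = ∑ j ∈ s, m a * m j * G a j := by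
          apply Finset.sum_congr rfl
          intro i _; rw [hGsym i a]; ring
        rw [hswap]
        obtain ⟨d, hd⟩ := ih
        obtain ⟨g, hg⟩ := hGdiag a
        exact ⟨m a * m a * g + (∑ j ∈ s, m a * m j * G a j) + d, by rw [hd, hg]; ring⟩
    obtain ⟨N, hN⟩ := hkey Finset.univ
    refine ⟨N, ?_⟩
    rw [hdouble]
    have : (∑ i, ∑ j, m i * m j * G i j : ℤ) = N + N := hN
    have h2 : ((∑ i, ∑ j, m i * m j * G i j : ℤ) : ℝ) = (N : ℝ) + N := by exact_mod_cast this
    push_cast at h2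
    rw [h2]; ring
  -- coefficients of θ
  obtain ⟨tc, htc⟩ := hpos_sum θ hθR
  have hθrepr : ∀ i, B.repr θ i = (tc i : ℝ) := fun i => by rw [htc, hrepr]
  -- θ is dominant
  have hdom : ∀ j, 0 ≤ ⟪θ, simple j⟫ := by
    intro j
    by_contra hneg
    push_neg at hneg
    obtain ⟨m, hm, hmem, hnorm⟩ := hcartan (simple j) (hRp (hsimple j)) θ hθRs
    have hsj : 0 < ⟪simple j, simple j⟫ := hpos _ (hRp (hsimple j))
    have hmneg : (m : ℝ) ≤ -1 := by
      have h' : (m : ℝ) < 0 := by nlinarith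
      have h'' : m < 0 := by exact_mod_cast h'
      have : m ≤ -1 := by omega
      exact_mod_cast this
    have hβ : θ - (m : ℝ) • simple j ∈ Rplus := by
      rcases hcases _ hmem with h | h
      · exact h
      · exfalso
        have h2 := hplusnn _ h j
        have h3 : B.repr (-(θ - (m : ℝ) • simple j)) j = -((tc j : ℝ) - (m : ℝ)) := by
          rw [hreprneg, hreprsub, hθrepr, hreprs j j, if_pos rfl, mul_one]
        rw [h3] at h2
        have : (0:ℝ) ≤ (tc j : ℝ) := by positivity
        linarith
    have hn2 : ⟪θ - (m : ℝ) • simple j, θ - (m : ℝ) • simple j⟫ = 2 := by rw [hnorm, hθ2]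
    obtain ⟨d, hd⟩ := hθmax _ hβ hn2
    have h4 : θ - (θ - (m : ℝ) • simple j) = (m : ℝ) • simple j := by abel
    rw [h4] at hd
    have h5 : B.repr ((m : ℝ) • simple j) j = (d j : ℝ) := by rw [hd, hrepr]
    have h6 : B.repr ((m : ℝ) • simple j) j = (m : ℝ) := by
      rw [hreprsmul, hreprs j j, if_pos rfl, mul_one]
    rw [h6] at h5
    have : (0:ℝ) ≤ (d j : ℝ) := by positivity
    linarith
  -- the pairings of θ with simple roots are nonnegative integers
  have hPex : ∀ i, ∃ p : ℤ, ⟪θ, simple i⟫ = (p : ℝ) ∧ 0 ≤ p := by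
    intro i
    obtain ⟨p, hp, _, _⟩ := hcartan θ hθRs (simple i) (hRp (hsimple i))
    rw [hθ2] at hp
    have h1 : ⟪θ, simple i⟫ = (p : ℝ) := by
      rw [real_inner_comm]; linarith
    refine ⟨p, h1, ?_⟩
    have := hdom i
    rw [h1] at this
    exact_mod_cast this
  choose P hP hPnn using hPex
  -- subtracting a simple root from a root
  have hsubroot : ∀ α ∈ Rset, ∀ i : Fin n, 0 < ⟪α, simple i⟫ → α ≠ simple i →
      α ≠ -simple i → α - simple i ∈ Rset := by
    intro α hα i hip hne1 hne2
    have hsiR : simple i ∈ Rset := hRp (hsimple i)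
    obtain ⟨p, hp, hpmem, _⟩ := hcartan (simple i) hsiR α hα
    obtain ⟨q, hq, hqmem, _⟩ := hcartan α hα (simple i) hsiR
    have hsi : 0 < ⟪simple i, simple i⟫ := hpos _ hsiR
    have hsα : 0 < ⟪α, α⟫ := hpos _ hα
    have hcomm : ⟪simple i, α⟫ = ⟪α, simple i⟫ := real_inner_comm _ _
    have hp1 : 1 ≤ p := by
      have h' : (0 : ℝ) < (p : ℝ) := by nlinarith
      have : 0 < p := by exact_mod_cast h'
      omega
    have hq1 : 1 ≤ q := by
      have h' : (0 : ℝ) < (q : ℝ) := by nlinarith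
      have : 0 < q := by exact_mod_cast h'
      omega
    by_cases hps : p = 1
    · have := hpmem
      rw [hps] at this
      simpa using this
    · by_cases hqs : q = 1
      · have h1 := hqmem
        rw [hqs] at h1
        simp only [Int.cast_one, one_smul] at h1
        have h2 := hsymmR _ h1
        rwa [neg_sub] at h2
      · exfalso
        have hp2 : 2 ≤ p := by omega
        have hq2 : 2 ≤ q := by omega
        have hp2r : (2:ℝ) ≤ (p:ℝ) := by exact_mod_cast hp2
        have hq2r : (2:ℝ) ≤ (q:ℝ) := by exact_mod_cast hq2
        have hcs := real_inner_mul_inner_self_le α (simple i)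
        have hq' : 2 * ⟪α, simple i⟫ = (q : ℝ) * ⟪α, α⟫ := by rw [← hcomm]; exact hq
        have h4 : (2 * ⟪α, simple i⟫) * (2 * ⟪α, simple i⟫)
            = ((p:ℝ) * ⟪simple i, simple i⟫) * ((q:ℝ) * ⟪α, α⟫) := by
          linear_combination (2 * ⟪α, simple i⟫) * hp + ((p:ℝ) * ⟪simple i, simple i⟫) * hq'
        have hYA : 0 < ⟪α, α⟫ * ⟪simple i, simple i⟫ := mul_pos hsα hsi
        have hprod : 0 ≤ ((p:ℝ) * (q:ℝ) - 4) * (⟪α, α⟫ * ⟪simple i, simple i⟫) :=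
          mul_nonneg (by nlinarith) (le_of_lt hYA)
        have hks : ⟪α, simple i⟫ * ⟪α, simple i⟫ = ⟪α, α⟫ * ⟪simple i, simple i⟫ := by
          nlinarith [h4, hcs, hprod]
        have hv : ⟪⟪simple i, simple i⟫ • α - ⟪α, simple i⟫ • simple i,
            ⟪simple i, simple i⟫ • α - ⟪α, simple i⟫ • simple i⟫ = 0 := by
          rw [hnormsub]
          simp only [real_inner_smul_left, real_inner_smul_right]
          linear_combination (-⟪simple i, simple i⟫) * hks
        have h6 : ⟪simple i, simple i⟫ • α = ⟪α, simple i⟫ • simple i := by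
          have h7 := inner_self_eq_zero.mp hv
          rwa [sub_eq_zero] at h7
        have h7 : α = ((⟪simple i, simple i⟫)⁻¹ * ⟪α, simple i⟫) • simple i := by
          have h8 := congrArg (fun z => (⟪simple i, simple i⟫)⁻¹ • z) h6
          simp only [smul_smul] at h8
          rwa [inv_mul_cancel₀ (ne_of_gt hsi), one_smul] at h8
        rcases hred (simple i) hsiR ((⟪simple i, simple i⟫)⁻¹ * ⟪α, simple i⟫)
            (by rw [← h7]; exact hα) with h | h
        · exact hne1 (by rw [h7, h, one_smul])
        · exact hne2 (by rw [h7, h, neg_smul, one_smul])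
  -- θ has full support
  have hFS : ∀ i, 0 < tc i := by
    by_contra hcon
    push_neg at hcon
    obtain ⟨j0, hj0⟩ := hcon
    have hj0' : tc j0 = 0 := Nat.le_zero.mp hj0
    have hcross : ∀ i j, 0 < tc i → ¬(0 < tc j) → ⟪simple i, simple j⟫ = 0 := by
      intro i j hi hj
      have hj' : tc j = 0 := Nat.eq_zero_of_not_pos hj
      have hterm : ∀ k ∈ Finset.univ, (tc k : ℝ) * ⟪simple k, simple j⟫ ≤ 0 := by
        intro k _
        rcases eq_or_ne k j with rfl | hkj
        · rw [hj']; simp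
        · exact mul_nonpos_iff.mpr (Or.inl ⟨by positivity, hoff k j hkj⟩)
      have hsum : ⟪θ, simple j⟫ = ∑ k, (tc k : ℝ) * ⟪simple k, simple j⟫ := by
        rw [htc, hIL]
      have hzero : ∑ k, (tc k : ℝ) * ⟪simple k, simple j⟫ = 0 :=
        le_antisymm (Finset.sum_nonpos hterm) (by rw [← hsum]; exact hdom j)
      have h2 := (Finset.sum_eq_zero_iff_of_nonpos hterm).mp hzero i (Finset.mem_univ i)
      rcases mul_eq_zero.mp h2 with h | h
      · exfalso
        have : (tc i : ℝ) ≠ 0 := by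
          have : tc i ≠ 0 := Nat.pos_iff_ne_zero.mp hi
          exact_mod_cast this
        exact this h
      · exact h
    -- no positive root has mixed support
    have hnomix : ∀ N : ℕ, ∀ π : Fin n → Prop,
        (∀ i j, π i → ¬ π j → ⟪simple i, simple j⟫ = 0) →
        ∀ α ∈ Rplus, ∀ e : Fin n → ℕ, α = ∑ i, (e i : ℝ) • simple i → ∑ i, e i ≤ N →
        ¬((∃ i, π i ∧ 0 < e i) ∧ (∃ j, ¬ π j ∧ 0 < e j)) := by
      intro N
      induction N with
      | zero =>
        rintro π hπ α hα e he hle ⟨⟨i1, _, hi1⟩, _⟩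
        have h2 : ∀ i ∈ Finset.univ, e i = 0 := by
          intro i _
          have := Nat.le_zero.mp hle
          exact Finset.sum_eq_zero_iff.mp this i (Finset.mem_univ i)
        have := h2 i1 (Finset.mem_univ i1)
        omega
      | succ N ih =>
        rintro π hπ α hα e he hle ⟨⟨i1, hπ1, hi1⟩, ⟨j1, hπ2, hj1⟩⟩
        have hreprα : ∀ i, B.repr α i = (e i : ℝ) := fun i => by rw [he, hrepr]
        have hip : ∃ i, 0 < e i ∧ 0 < ⟪α, simple i⟫ := by
          by_contra hno
          push_neg at hno
          have hαn : ⟪α, α⟫ ≤ 0 := by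
            have hexp : ⟪α, α⟫ = ∑ i, (e i : ℝ) * ⟪simple i, α⟫ :=
              (congrArg (fun z => ⟪z, α⟫) he).trans (hIL _ α)
            rw [hexp]
            apply Finset.sum_nonpos
            intro i _
            rcases Nat.eq_zero_or_pos (e i) with h0' | h1'
            · rw [h0']; simp
            · have h2 : ⟪simple i, α⟫ ≤ 0 := by
                rw [real_inner_comm]; exact hno i h1'
              exact mul_nonpos_iff.mpr (Or.inl ⟨by positivity, h2⟩)
          linarith [hpos α (hRp hα)]
        obtain ⟨istar, hest, hinst⟩ := hip
        have descent : ∀ σ : Fin n → Prop,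
            (∀ i j, σ i → ¬ σ j → ⟪simple i, simple j⟫ = 0) →
            σ istar → (∃ w, ¬ σ w ∧ 0 < e w) → False := by
          rintro σ hσ hσi ⟨w, hσw, hew⟩
          have hwistar : w ≠ istar := fun h => hσw (h ▸ hσi)
          have hαne : α ≠ simple istar := by
            intro h
            have h1 : (e w : ℝ) = 0 := by
              rw [← hreprα w, h, hreprs, if_neg (Ne.symm hwistar)]
            have h2 : e w = 0 := by exact_mod_cast h1
            omega
          have hαne2 : α ≠ -simple istar := by
            intro h
            have h1 : (e istar : ℝ) = -1 := by
              rw [← hreprα istar, h, hreprneg, hreprs istar istar, if_pos rfl]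
            have h2 : (0:ℝ) ≤ (e istar : ℝ) := by positivity
            linarith
          have hβR : α - simple istar ∈ Rset := hsubroot α (hRp hα) istar hinst hαne hαne2
          have hβp : α - simple istar ∈ Rplus := by
            rcases hcases _ hβR with h | h
            · exact h
            · exfalso
              have h2 := hplusnn _ h w
              have h3 : B.repr (-(α - simple istar)) w = -(e w : ℝ) := by
                rw [hreprneg, hreprsub1, hreprα, hreprs istar w, if_neg (Ne.symm hwistar), sub_zero]
              rw [h3] at h2
              have : (0:ℝ) < (e w : ℝ) := by exact_mod_cast hew
              linarith
          set e' : Fin n → ℕ := Function.update e istar (e istar - 1) with he'def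
          have he'istar : e' istar = e istar - 1 := Function.update_self istar _ e
          have he'ne : ∀ i, i ≠ istar → e' i = e i := fun i h => Function.update_of_ne h _ e
          have hβe : α - simple istar = ∑ i, (e' i : ℝ) • simple i := by
            have hsplit : ∀ i ∈ Finset.univ, (e' i : ℝ) • simple i
                = (e i : ℝ) • simple i - (if i = istar then simple i else 0) := by
              intro i _
              by_cases h : i = istar
              · subst h
                rw [he'istar, if_pos rfl]
                have h1 : 1 ≤ e i := hest
                rw [Nat.cast_sub h1, Nat.cast_one, sub_smul, one_smul]
              · rw [he'ne i h, if_neg h, sub_zero]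
            rw [Finset.sum_congr rfl hsplit, Finset.sum_sub_distrib,
              Finset.sum_ite_eq' Finset.univ istar (fun i => simple i),
              if_pos (Finset.mem_univ istar), ← he]
          have hsum' : ∑ i, e' i ≤ N := by
            have h1 : ∑ i, e' i + 1 = ∑ i, e i := by
              rw [he'def, Finset.sum_update_of_mem (Finset.mem_univ istar),
                Finset.sum_eq_sum_sdiff_singleton_add (Finset.mem_univ istar) e]
              omega
            omega
          have hIH := ih σ hσ (α - simple istar) hβp e' hβe hsum'
          have hw' : 0 < e' w := by rw [he'ne w hwistar]; exact hew
          have hσzero : ∀ i, σ i → e' i = 0 := by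
            intro i hσi'
            by_contra hz
            exact hIH ⟨⟨i, hσi', Nat.pos_of_ne_zero hz⟩, ⟨w, hσw, hw'⟩⟩
          have horthβ : ⟪α - simple istar, simple istar⟫ = 0 := by
            rw [hβe, hIL]
            apply Finset.sum_eq_zero
            intro i _
            rcases Nat.eq_zero_or_pos (e' i) with h0' | h1'
            · rw [h0']; simp
            · have hσn : ¬ σ i := fun hσi' => by
                have := hσzero i hσi'; omega
              have := hσ istar i hσi hσn
              rw [real_inner_comm] at this
              rw [this, mul_zero]
          have hinner2 : ⟪α, simple istar⟫ = ⟪simple istar, simple istar⟫ := by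
            have h1 : α = (α - simple istar) + simple istar := by abel
            conv_lhs => rw [h1]
            rw [inner_add_left, horthβ, zero_add]
          have h2s : α - (2 : ℝ) • simple istar ∈ Rset := by
            have h1 := hrefl (simple istar) (hRp (hsimple istar)) α (hRp hα)
            have hsi : ⟪simple istar, simple istar⟫ ≠ 0 := ne_of_gt (hpos _ (hRp (hsimple istar)))
            have hc2 : 2 * ⟪α, simple istar⟫ / ⟪simple istar, simple istar⟫ = 2 := by
              rw [hinner2, mul_div_assoc, div_self hsi, mul_one]
            rwa [hc2] at h1
          have he1 : e istar = 1 := by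
            have := hσzero istar hσi
            rw [he'istar] at this
            omega
          rcases hcases _ h2s with h | h
          · have h2 := hplusnn _ h istar
            have h3 : B.repr (α - (2:ℝ) • simple istar) istar = (e istar : ℝ) - 2 := by
              rw [hreprsub, hreprα, hreprs istar istar, if_pos rfl, mul_one]
            rw [h3, he1] at h2
            norm_num at h2
          · have h2 := hplusnn _ h w
            have h3 : B.repr (-(α - (2:ℝ) • simple istar)) w = -(e w : ℝ) := by
              rw [hreprneg, hreprsub, hreprα, hreprs istar w, if_neg (Ne.symm hwistar), mul_zero, sub_zero]
            rw [h3] at h2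
            have : (0:ℝ) < (e w : ℝ) := by exact_mod_cast hew
            linarith
        by_cases hK : π istar
        · exact descent π hπ hK ⟨j1, hπ2, hj1⟩
        · refine descent (fun i => ¬ π i) ?_ hK ⟨i1, not_not_intro hπ1, hi1⟩
          intro i j hi hj
          have := hπ j i (not_not.mp hj) hi
          rwa [real_inner_comm] at this
    -- support dichotomy for all roots
    have hsupp : ∀ a ∈ Rset, (∀ i, ¬(0 < tc i) → B.repr a i = 0) ∨
        (∀ i, 0 < tc i → B.repr a i = 0) := by
      intro a ha
      rcases hcases a ha with h | h
      · obtain ⟨e, he⟩ := hpos_sum a h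
        have hra : ∀ i, B.repr a i = (e i : ℝ) := fun i => by rw [he, hrepr]
        have hnm := hnomix (∑ i, e i) (fun i => 0 < tc i) hcross a h e he le_rfl
        by_cases hx : ∃ i, 0 < tc i ∧ 0 < e i
        · left
          intro i hiK
          by_contra hz
          have he0 : 0 < e i := by
            rw [hra i] at hz
            have : e i ≠ 0 := by
              intro h'; rw [h'] at hz; simp at hz
            omega
          exact hnm ⟨hx, ⟨i, hiK, he0⟩⟩
        · right
          push_neg at hx
          intro i hiK
          rw [hra i]
          have := hx i hiK
          have : e i = 0 := by omega
          simp [this]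
      · obtain ⟨e, he⟩ := hpos_sum (-a) h
        have hra : ∀ i, B.repr a i = -(e i : ℝ) := by
          intro i
          have h1 : B.repr (-a) i = (e i : ℝ) := by rw [he, hrepr]
          rw [map_neg] at h1
          simp only [Finsupp.coe_neg, Pi.neg_apply] at h1
          linarith
        have hnm := hnomix (∑ i, e i) (fun i => 0 < tc i) hcross (-a) h e he le_rfl
        by_cases hx : ∃ i, 0 < tc i ∧ 0 < e i
        · left
          intro i hiK
          by_contra hz
          have he0 : 0 < e i := by
            rw [hra i] at hz
            have : e i ≠ 0 := by
              intro h'; rw [h'] at hz; simp at hz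
            omega
          exact hnm ⟨hx, ⟨i, hiK, he0⟩⟩
        · right
          push_neg at hx
          intro i hiK
          rw [hra i]
          have := hx i hiK
          have : e i = 0 := by omega
          simp [this]
    -- partition Rset by support and contradict irreducibility
    have horth : ∀ a ∈ {a | a ∈ Rset ∧ ∀ i, ¬(0 < tc i) → B.repr a i = 0},
        ∀ b' ∈ {a | a ∈ Rset ∧ ¬(∀ i, ¬(0 < tc i) → B.repr a i = 0)}, ⟪a, b'⟫ = 0 := by
      rintro a ⟨haR, haK⟩ b' ⟨hbR, hbK⟩
      have hbz : ∀ i, 0 < tc i → B.repr b' i = 0 := by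
        rcases hsupp b' hbR with h | h
        · exact absurd h hbK
        · exact h
      conv_lhs => rw [hexpand a]
      rw [hIL]
      apply Finset.sum_eq_zero
      intro i _
      rcases eq_or_ne (B.repr a i) 0 with h | h
      · rw [h, zero_mul]
      · have hiK : 0 < tc i := by
          by_contra h'
          exact h (haK i h')
        have hsb : ⟪simple i, b'⟫ = 0 := by
          conv_lhs => rw [hexpand b']
          rw [hIR]
          apply Finset.sum_eq_zero
          intro j _
          rcases eq_or_ne (B.repr b' j) 0 with h2 | h2
          · rw [h2, zero_mul]
          · have hjK : ¬(0 < tc j) := fun h' => h2 (hbz j h')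
            rw [hcross i j hiK hjK, mul_zero]
        rw [hsb, mul_zero]
    rcases hirr {a | a ∈ Rset ∧ ∀ i, ¬(0 < tc i) → B.repr a i = 0}
        {a | a ∈ Rset ∧ ¬(∀ i, ¬(0 < tc i) → B.repr a i = 0)}
        (by ext x; simp only [Set.mem_union, Set.mem_setOf_eq]; tauto) horth with h | h
    · rw [Set.eq_empty_iff_forall_notMem] at h
      refine h θ ⟨hθRs, ?_⟩
      intro i hiK
      rw [hθrepr]
      have : tc i = 0 := Nat.eq_zero_of_not_pos hiK
      simp [this]
    · rw [Set.eq_empty_iff_forall_notMem] at h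
      refine h (simple j0) ⟨hRp (hsimple j0), ?_⟩
      intro hall
      have h1 := hall j0 (by omega)
      rw [hreprs] at h1
      simp at h1
  -- main argument
  by_cases hall : ∀ i, tc i ≤ c i
  · refine ⟨fun i => c i - tc i, ?_⟩
    rw [hc, htc, ← Finset.sum_sub_distrib]
    apply Finset.sum_congr rfl
    intro i _
    rw [← sub_smul]
    congr 1
    push_cast [Nat.cast_sub (hall i)]
    ring
  · exfalso
    push_neg at hall
    obtain ⟨i0, hi0⟩ := hall
    set m : Fin n → ℕ := fun i => tc i - c i with hmdef
    set p : Fin n → ℕ := fun i => c i - tc i with hpdef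
    have hpm : ∀ i, (c i : ℝ) - (tc i : ℝ) = (p i : ℝ) - (m i : ℝ) := by
      intro i
      have hpi : p i = c i - tc i := rfl
      have hmi : m i = tc i - c i := rfl
      rcases le_total (c i) (tc i) with h | h
      · have h1 : p i = 0 := by omega
        have h2 : (m i : ℝ) = (tc i : ℝ) - (c i : ℝ) := by
          rw [hmi, Nat.cast_sub h]
        rw [h1, h2]; push_cast; ring
      · have h1 : m i = 0 := by omega
        have h2 : (p i : ℝ) = (c i : ℝ) - (tc i : ℝ) := by
          rw [hpi, Nat.cast_sub h]
        rw [h1, h2]; push_cast; ring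
    set x : EuclideanSpace ℝ (Fin n) := ∑ i, (p i : ℝ) • simple i with hxdef
    set y : EuclideanSpace ℝ (Fin n) := ∑ i, (m i : ℝ) • simple i with hydef
    have hby : b - θ = x - y := by
      rw [hc, htc, hxdef, hydef, ← Finset.sum_sub_distrib, ← Finset.sum_sub_distrib]
      apply Finset.sum_congr rfl
      intro i _
      rw [← sub_smul, ← sub_smul, hpm i]
    have hbeq : b = θ + (x - y) := by rw [← hby]; abel
    -- y ≠ 0
    have hmi0 : 0 < m i0 := by
      have hmi : m i0 = tc i0 - c i0 := rfl
      omega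
    have hy0 : y ≠ 0 := by
      intro h
      have h1 : (m i0 : ℝ) = 0 := by
        rw [← hrepr (fun i => (m i : ℝ)) i0, ← hydef, h]
        simp
      have h2 : m i0 = 0 := by exact_mod_cast h1
      omega
    -- ⟪y, y⟫ = 2N with N ≥ 1
    obtain ⟨N, hN⟩ := heven (fun i => (m i : ℤ))
    have hNy : ⟪y, y⟫ = 2 * (N : ℝ) := by
      rw [hydef]
      rw [show (∑ i, (m i : ℝ) • simple i) = ∑ i, (((m i : ℤ) : ℤ) : ℝ) • simple i from
        Finset.sum_congr rfl fun i _ => by push_cast; ring_nf]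
      exact hN
    have hyypos : 0 < ⟪y, y⟫ := by
      rcases lt_or_eq_of_le (real_inner_self_nonneg (x := y)) with h | h
      · exact h
      · exact absurd (inner_self_eq_zero.mp h.symm) hy0
    have hN1 : 1 ≤ N := by
      have : (0:ℝ) < 2 * (N:ℝ) := hNy ▸ hyypos
      have : (0:ℝ) < (N:ℝ) := by linarith
      exact_mod_cast this
    -- ⟪θ, y⟫ = W
    set W : ℤ := ∑ i, (m i : ℤ) * P i with hWdef
    have hθy : ⟪θ, y⟫ = (W : ℝ) := by
      rw [hydef, hIR, hWdef]
      push_cast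
      apply Finset.sum_congr rfl
      intro i _
      rw [hP i]
    -- ⟪x, y⟫ ≤ 0
    have hxy : ⟪x, y⟫ ≤ 0 := by
      rw [hxdef, hIL]
      apply Finset.sum_nonpos
      intro i _
      rw [hydef, hIR, Finset.mul_sum]
      apply Finset.sum_nonpos
      intro j _
      rcases eq_or_ne i j with rfl | hij
      · have : p i = 0 ∨ m i = 0 := by
          rcases le_total (c i) (tc i) with h | h
          · exact Or.inl (Nat.sub_eq_zero_of_le h)
          · exact Or.inr (Nat.sub_eq_zero_of_le h)
        rcases this with h | h
        · rw [h]; simp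
        · rw [h]; simp
      · have h1 := hoff i j hij
        have h2 : (0:ℝ) ≤ (p i : ℝ) * (m j : ℝ) := by positivity
        nlinarith
    -- ⟪b, y⟫ ≥ 0
    have hby' : 0 ≤ ⟪b, y⟫ := by
      rw [hydef, hIR]
      apply Finset.sum_nonneg
      intro i _
      exact mul_nonneg (by positivity) (hbdom i)
    -- key inequality: W ≥ 2N
    have hkey : (2:ℝ) * (N:ℝ) ≤ (W:ℝ) := by
      have h1 : ⟪b, y⟫ = ⟪θ, y⟫ + ⟪x, y⟫ - ⟪y, y⟫ := by
        rw [hbeq, inner_add_left, inner_sub_left]; ring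
      rw [h1, hθy, hNy] at hby'
      linarith
    -- Cauchy–Schwarz: W² ≤ 4N
    have hcs : (W:ℝ) * (W:ℝ) ≤ 4 * (N:ℝ) := by
      have h1 := real_inner_mul_inner_self_le θ y
      rw [hθy, hθ2, hNy] at h1
      linarith
    -- conclude N = 1, W = 2
    have hNW : N = 1 ∧ W = 2 := by
      have hWint : 2 * N ≤ W := by exact_mod_cast hkey
      have hWsq : W * W ≤ 4 * N := by exact_mod_cast hcs
      clear * - hN1 hWint hWsq
      constructor
      · nlinarith
      · nlinarith
    obtain ⟨hN1', hW2⟩ := hNW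
    -- θ = y
    have hθeqy : θ = y := by
      have h1 : ⟪θ - y, θ - y⟫ = 0 := by
        have h2 : ⟪θ - y, θ - y⟫ = ⟪θ, θ⟫ - 2 * ⟪θ, y⟫ + ⟪y, y⟫ := real_inner_sub_sub_self θ y
        rw [h2, hθ2, hθy, hNy, hW2, hN1']
        norm_num
      have := inner_self_eq_zero.mp h1
      rwa [sub_eq_zero] at this
    -- contradiction: θ = y forces b = 0
    have htcm : ∀ i, tc i = m i := by
      intro i
      have h1 : B.repr θ i = B.repr y i := by rw [hθeqy]
      rw [hθrepr, hydef, hrepr] at h1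
      exact_mod_cast h1
    have hpz : ∀ i, p i = 0 := by
      intro i
      have h1 := hFS i
      have h2 := htcm i
      have hpi : p i = c i - tc i := rfl
      have hmi : m i = tc i - c i := rfl
      omega
    have hxz : x = 0 := by
      rw [hxdef]
      apply Finset.sum_eq_zero
      intro i _
      rw [hpz i]
      simp
    apply hb0
    rw [hbeq, hθeqy, hxz]
    abel
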